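/- Lower bound for stationary computer probability: if Φ is positive recurrent with stationary distribution μ(·|Φ), then for all C, D ∈ Φ, 2^{-K_C(D)} ≤ μ(D|Φ)/μ(C|Φ) ≤ 2^{K_D(C)}, where K_C(D) is emulation complexity. -/

import Mathlib

open scoped Classical

/-- Binary strings. -/
abbrev Str := List Bool

/-- A computer: a partial function on binary strings (`none` = undefined). -/
abbrev Computer := Str → Option Str

/-- `C` emulates `D` via the string `x`: `C (x ⊗ s) = D s` for all `s`. -/
def emulates (C D : Computer) (x : Str) : Prop := ∀ s : Str, C (x ++ s) = D s

/-- The computer `C →x`, i.e. `s ↦ C (x ⊗ s)`. -/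
def shiftC (C : Computer) (x : Str) : Computer := fun s => C (x ++ s)

/-- `C` emulates `D` via some string. -/
def emu (C D : Computer) : Prop := ∃ x : Str, emulates C D x

/-- `Φ` is connected: some `U ∈ Φ` emulates every member of `Φ`. -/
def Connected (Φ : Set Computer) : Prop := ∃ U ∈ Φ, ∀ X ∈ Φ, emu U X

/-- The set `Φ^U` of `Φ`-universal computers. -/
def univSet (Φ : Set Computer) : Set Computer := {U | U ∈ Φ ∧ ∀ X ∈ Φ, emu U X}

/-- The closure `Φ̄^U`: computers emulating every member of `Φ` and emulated by some member of `Φ`. -/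
def closureU (Φ : Set Computer) : Set Computer :=
  {C | (∀ D ∈ Φ, emu C D) ∧ ∃ X ∈ Φ, emu X C}

/-- A branching set of computers. -/
def Branching (Φ : Set Computer) : Prop :=
  ∀ C ∈ Φ, (∀ x y : Str, shiftC C (x ++ y) ∈ Φ → shiftC C x ∈ Φ) ∧
    ∃ x : Str, x ≠ [] ∧ shiftC C x ∈ Φ

/-- The `Φ`-tree of `C`: inputs making `C` emulate a member of `Φ`. -/
def tree (Φ : Set Computer) (C : Computer) : Set Str := {x | shiftC C x ∈ Φ}

/-- Helper for path probability, recursing over the reversed path. -/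
noncomputable def pathProbAux (T : Set Str) : Str → ℝ
  | [] => 1
  | b :: r => if r.reverse ++ [!b] ∈ T then pathProbAux T r / 2 else pathProbAux T r

/-- Path probability on the tree `T`: `μ(λ) = 1`, and the probability halves
exactly at binary branch points (where the sibling node is also in `T`). -/
noncomputable def pathProb (T : Set Str) (x : Str) : ℝ := pathProbAux T x.reverse

/-- The `n`-step computer probability `μ_C^{(n)}(D|Φ)`: probability of arriving
at the computer `D` after `n` steps of the random walk on the `Φ`-tree of `C`. -/
noncomputable def nstep (Φ : Set Computer) (C D : Computer) (n : ℕ) : ℝ :=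
  ∑' x : {x : Str // x.length = n ∧ shiftC C x = D}, pathProb (tree Φ C) (x : Str)

/-- Emulation complexity: minimal length of a string via which `C` emulates `D`
(`⊤` = ∞ if none exists). -/
noncomputable def EK (C D : Computer) : ℕ∞ :=
  sInf {n : ℕ∞ | ∃ x : Str, (x.length : ℕ∞) = n ∧ emulates C D x}

/-- Kolmogorov complexity of the string `s` relative to `C` (`⊤` = ∞). -/
noncomputable def Kstr (C : Computer) (s : Str) : ℕ∞ :=
  sInf {n : ℕ∞ | ∃ p : Str, (p.length : ℕ∞) = n ∧ C p = some s}

/-- `Φ` is positive recurrent with stationary distribution `μ`: `Φ` is branching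
and irreducible, the `n`-step probabilities `μ_C^{(n)}(D|Φ)` converge to `μ D`
independently of the starting computer `C`, the limits are strictly positive and
form a probability distribution on `Φ`. -/
structure PosRecurrent (Φ : Set Computer) (μ : Computer → ℝ) : Prop where
  branching : Branching Φ
  irreducible : ∀ C ∈ Φ, ∀ D ∈ Φ, emu C D
  tendsto : ∀ C ∈ Φ, ∀ D ∈ Φ,
    Filter.Tendsto (fun n => nstep Φ C D n) Filter.atTop (nhds (μ D))
  pos : ∀ D ∈ Φ, 0 < μ D
  sum_one : ∑' D : Φ, μ (D : Computer) = 1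

/-- `2^{-k}` for an extended natural `k`, with `2^{-∞} = 0`. -/
noncomputable def twoPowNeg (k : ℕ∞) : ℝ := if k = ⊤ then 0 else (2 : ℝ)⁻¹ ^ k.toNat

/-- Stationary string probability `μ(s|Φ)`: total stationary probability of the
computers in `Φ` whose output on the empty input is `s` (`s = none` meaning `∞`). -/
noncomputable def strProb (Φ : Set Computer) (μ : Computer → ℝ) (s : Option Str) : ℝ :=
  ∑' U : {U : Computer // U ∈ Φ ∧ U [] = s}, μ (U : Computer)


lemma pathProbAux_nonneg (T : Set Str) (l : Str) : 0 ≤ pathProbAux T l := by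
  induction l with
  | nil => norm_num [pathProbAux]
  | cons b r ih => simp only [pathProbAux]; split <;> [linarith; exact ih]

lemma pathProbAux_lb (T : Set Str) (l : Str) : (2⁻¹ : ℝ) ^ l.length ≤ pathProbAux T l := by
  induction l with
  | nil => norm_num [pathProbAux]
  | cons b r ih =>
    simp only [pathProbAux, List.length_cons, pow_succ]
    have h2 : (2⁻¹ : ℝ) ^ r.length ≤ pathProbAux T r := ih
    have h0 : (0:ℝ) ≤ (2⁻¹:ℝ) ^ r.length := by positivity
    split <;> nlinarith

lemma pathProbAux_append (T : Set Str) (r s : Str) :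
    pathProbAux T (r ++ s) = pathProbAux {z | s.reverse ++ z ∈ T} r * pathProbAux T s := by
  induction r with
  | nil => simp [pathProbAux]
  | cons b r ih =>
    simp only [List.cons_append, pathProbAux, List.append_eq, List.reverse_append, List.append_assoc]
    have : (s.reverse ++ (r.reverse ++ [!b]) ∈ T) ↔ (r.reverse ++ [!b] ∈ {z | s.reverse ++ z ∈ T}) := Iff.rfl
    rw [this]
    split <;> rw [ih] <;> ring

lemma pathProb_append (T : Set Str) (x y : Str) :
    pathProb T (x ++ y) = pathProb T x * pathProb {z | x ++ z ∈ T} y := by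
  simp only [pathProb, List.reverse_append]
  rw [pathProbAux_append, List.reverse_reverse]
  ring

lemma shiftC_shiftC (C : Computer) (x y : Str) : shiftC (shiftC C x) y = shiftC C (x ++ y) := by
  funext s; simp [shiftC, List.append_assoc]

lemma tree_shift (Φ : Set Computer) (C : Computer) (x : Str) :
    {z : Str | x ++ z ∈ tree Φ C} = tree Φ (shiftC C x) := by
  ext z; simp [tree, shiftC_shiftC]

instance idx_finite (P : Str → Prop) (n : ℕ) : Finite {x : Str // x.length = n ∧ P x} := by
  have : {x : Str | x.length = n ∧ P x} ⊆ {l : List Bool | l.length = n} := fun x hx => hx.1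
  exact Set.Finite.subset (List.finite_length_eq Bool n) this

lemma nstep_eq_sum (Φ : Set Computer) (C D : Computer) (n : ℕ)
    [Fintype {x : Str // x.length = n ∧ shiftC C x = D}] :
    nstep Φ C D n = ∑ x : {x : Str // x.length = n ∧ shiftC C x = D}, pathProb (tree Φ C) (x : Str) :=
  tsum_fintype _

lemma nstep_ge_single (Φ : Set Computer) (C D : Computer) (n : ℕ) (x : Str)
    (hl : x.length = n) (hs : shiftC C x = D) : pathProb (tree Φ C) x ≤ nstep Φ C D n := by
  have : Fintype {x : Str // x.length = n ∧ shiftC C x = D} := Fintype.ofFinite _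
  rw [nstep_eq_sum]
  exact Finset.single_le_sum (f := fun y : {x : Str // x.length = n ∧ shiftC C x = D} => pathProb (tree Φ C) (y : Str))
    (fun y _ => pathProbAux_nonneg _ _) (Finset.mem_univ (⟨x, hl, hs⟩ : {x : Str // x.length = n ∧ shiftC C x = D}))

lemma nstep_mul_le (Φ : Set Computer) (A B D : Computer) (m n : ℕ) :
    nstep Φ A B m * nstep Φ B D n ≤ nstep Φ A D (m + n) := by
  have i1 : Fintype {x : Str // x.length = m ∧ shiftC A x = B} := Fintype.ofFinite _
  have i2 : Fintype {x : Str // x.length = n ∧ shiftC B x = D} := Fintype.ofFinite _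
  have i3 : Fintype {x : Str // x.length = m + n ∧ shiftC A x = D} := Fintype.ofFinite _
  rw [nstep_eq_sum, nstep_eq_sum, nstep_eq_sum, Finset.sum_mul_sum, ← Finset.sum_product']
  set e : {x : Str // x.length = m ∧ shiftC A x = B} × {x : Str // x.length = n ∧ shiftC B x = D} →
      {x : Str // x.length = m + n ∧ shiftC A x = D} := fun p =>
    ⟨p.1.1 ++ p.2.1, by simp [p.1.2.1, p.2.2.1], by
      rw [← shiftC_shiftC, p.1.2.2, p.2.2.2]⟩ with he
  have hinj : Function.Injective e := by
    rintro ⟨⟨x1, hx1, _⟩, ⟨y1, _, _⟩⟩ ⟨⟨x2, hx2, _⟩, ⟨y2, _, _⟩⟩ hpq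
    have : x1 ++ y1 = x2 ++ y2 := congrArg Subtype.val hpq
    obtain ⟨h1, h2⟩ := List.append_inj this (hx1.trans hx2.symm)
    simp_all
  have key : ∀ p : {x : Str // x.length = m ∧ shiftC A x = B} × {x : Str // x.length = n ∧ shiftC B x = D},
      pathProb (tree Φ A) (p.1 : Str) * pathProb (tree Φ B) (p.2 : Str)
        = pathProb (tree Φ A) ((e p : Str)) := by
    rintro ⟨⟨x, hx, hxs⟩, ⟨y, hy, hys⟩⟩
    show pathProb (tree Φ A) x * pathProb (tree Φ B) y = pathProb (tree Φ A) (x ++ y)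
    rw [pathProb_append, tree_shift, hxs]
  rw [Finset.univ_product_univ]
  have step1 : (∑ p : {x : Str // x.length = m ∧ shiftC A x = B} × {x : Str // x.length = n ∧ shiftC B x = D},
      pathProb (tree Φ A) ((p.1 : Str)) * pathProb (tree Φ B) ((p.2 : Str)))
      = ∑ p, pathProb (tree Φ A) ((e p : Str)) :=
    Finset.sum_congr rfl fun p _ => key p
  have step2 : (∑ z ∈ Finset.univ.image e, pathProb (tree Φ A) ((z : Str)))
      = ∑ p, pathProb (tree Φ A) ((e p : Str)) :=
    Finset.sum_image (fun a _ b _ hab => hinj hab)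
  rw [step1, ← step2]
  apply Finset.sum_le_sum_of_subset_of_nonneg (Finset.subset_univ _)
  intro z _ _; exact pathProbAux_nonneg _ _


lemma pathProb_lb (T : Set Str) (x : Str) : (2⁻¹ : ℝ) ^ x.length ≤ pathProb T x := by
  simpa [pathProb] using pathProbAux_lb T x.reverse

lemma twoPowNeg_coe (N : ℕ) : twoPowNeg (N : ℕ∞) = (2⁻¹ : ℝ) ^ N := by
  simp [twoPowNeg]

lemma mu_bound (Φ : Set Computer) (μ : Computer → ℝ) (h : PosRecurrent Φ μ)
    (C D : Computer) (hC : C ∈ Φ) (hD : D ∈ Φ) : μ C * twoPowNeg (EK C D) ≤ μ D := by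
  by_cases hex : ∃ x, emulates C D x
  · have p : ∃ k : ℕ, ∃ x : Str, x.length = k ∧ emulates C D x :=
      ⟨hex.choose.length, hex.choose, rfl, hex.choose_spec⟩
    obtain ⟨x, hxl, hxe⟩ := Nat.find_spec p
    set N := Nat.find p with hN
    have hEK : EK C D = (N : ℕ∞) := by
      apply le_antisymm
      · exact sInf_le ⟨x, by rw [hxl], hxe⟩
      · apply le_sInf
        rintro m ⟨y, hyl, hye⟩
        rw [← hyl]
        exact_mod_cast Nat.find_min' p ⟨y, rfl, hye⟩
    have hsh : shiftC C x = D := funext fun s => hxe s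
    have h1 : (2⁻¹ : ℝ) ^ N ≤ nstep Φ C D N :=
      calc (2⁻¹ : ℝ) ^ N = (2⁻¹ : ℝ) ^ x.length := by rw [hxl]
        _ ≤ pathProb (tree Φ C) x := pathProb_lb _ _
        _ ≤ nstep Φ C D N := nstep_ge_single Φ C D N x hxl hsh
    have h2 : ∀ m, nstep Φ C C m * nstep Φ C D N ≤ nstep Φ C D (m + N) :=
      fun m => nstep_mul_le Φ C C D m N
    have hlim1 : Filter.Tendsto (fun m => nstep Φ C D (m + N)) Filter.atTop (nhds (μ D)) :=
      (h.tendsto C hC D hD).comp (Filter.tendsto_add_atTop_nat N)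
    have hlim2 : Filter.Tendsto (fun m => nstep Φ C C m * nstep Φ C D N) Filter.atTop
        (nhds (μ C * nstep Φ C D N)) := (h.tendsto C hC C hC).mul_const _
    have h3 : μ C * nstep Φ C D N ≤ μ D := le_of_tendsto_of_tendsto' hlim2 hlim1 h2
    rw [hEK, twoPowNeg_coe]
    calc μ C * (2⁻¹ : ℝ) ^ N ≤ μ C * nstep Φ C D N :=
        mul_le_mul_of_nonneg_left h1 (h.pos C hC).le
      _ ≤ μ D := h3
  · have hempty : {n : ℕ∞ | ∃ x : Str, (x.length : ℕ∞) = n ∧ emulates C D x} = ∅ := by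
      ext n
      simp only [Set.mem_setOf_eq, Set.mem_empty_iff_false, iff_false]
      rintro ⟨y, _, hy⟩
      exact hex ⟨y, hy⟩
    have htop : EK C D = ⊤ := by rw [EK, hempty, sInf_empty]
    rw [htop]
    simpa [twoPowNeg] using (h.pos D hD).le


/-- Bound on stationary computer probability via emulation complexity:
`2^{-K_C(D)} ≤ μ(D|Φ)/μ(C|Φ) ≤ 2^{K_D(C)}`, stated multiplicatively as
`μ(C|Φ)·2^{-K_C(D)} ≤ μ(D|Φ)` and `μ(D|Φ)·2^{-K_D(C)} ≤ μ(C|Φ)`. -/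
theorem stationary_emulation_bound (Φ : Set Computer) (μ : Computer → ℝ)
    (h : PosRecurrent Φ μ) (C D : Computer) (hC : C ∈ Φ) (hD : D ∈ Φ) :
    μ C * twoPowNeg (EK C D) ≤ μ D ∧ μ D * twoPowNeg (EK D C) ≤ μ C :=
  ⟨mu_bound Φ μ h C D hC hD, mu_bound Φ μ h D C hD hC⟩
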